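/- The d-dimensional tensor filter G_j = Π_{s=1}^d H^F_{j_s} satisfies |G_j| ≤ (2/(1 + (b/n)·||j||_∞))^F for all j ∈ [n]^d, provided b ≥ 3. -/

import Mathlib

lemma abs_sin_nat_mul_le (m : ℕ) (x : ℝ) :
    |Real.sin ((m : ℝ) * x)| ≤ (m : ℝ) * |Real.sin x| := by
  induction m with
  | zero => simp
  | succ k ih =>
    have h : ((k + 1 : ℕ) : ℝ) * x = (k : ℝ) * x + x := by push_cast; ring
    rw [h, Real.sin_add]
    calc |Real.sin ((k : ℝ) * x) * Real.cos x + Real.cos ((k : ℝ) * x) * Real.sin x|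
        ≤ |Real.sin ((k : ℝ) * x) * Real.cos x| + |Real.cos ((k : ℝ) * x) * Real.sin x| :=
          abs_add_le _ _
      _ ≤ |Real.sin ((k : ℝ) * x)| * 1 + 1 * |Real.sin x| := by
          rw [abs_mul, abs_mul]
          gcongr
          · exact Real.abs_cos_le_one x
          · exact Real.abs_cos_le_one _
      _ ≤ (k : ℝ) * |Real.sin x| + 1 * |Real.sin x| := by
          rw [mul_one]
          gcongr
      _ = ((k + 1 : ℕ) : ℝ) * |Real.sin x| := by push_cast; ring

theorem stmt_4 (n b F d : ℕ) (hn : ∃ k, n = 2 ^ k) (hb : 3 ≤ b) (hF : 1 ≤ F) (hd : 0 < d)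
    (H : ℤ → ℝ) (hH0 : H 0 = 1)
    (hH : ∀ j : ℤ, j ≠ 0 → H j = (Real.sin (Real.pi * ((b : ℝ) - 1) * j / n) /
        (((b : ℝ) - 1) * Real.sin (Real.pi * j / n))) ^ F)
    (j : Fin d → ℤ) (hjr : ∀ s, 2 * |(j s : ℝ)| ≤ n) :
    |∏ s, H (j s)| ≤
      (2 / (1 + ((b : ℝ) / n) * ((Finset.univ.sup fun s => (j s).natAbs : ℕ) : ℝ))) ^ F := by
  obtain ⟨k, hk⟩ := hn
  have hn0 : 0 < n := hk ▸ Nat.pow_pos (by norm_num)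
  have hnR : (0 : ℝ) < n := by exact_mod_cast hn0
  have hbR : (3 : ℝ) ≤ b := by exact_mod_cast hb
  have hb1 : (1 : ℝ) < (b : ℝ) - 1 := by linarith
  have hpi : (0 : ℝ) < Real.pi := Real.pi_pos
  set M : ℕ := Finset.univ.sup fun s => (j s).natAbs with hM
  -- key one-dimensional bounds
  have key : ∀ m : ℤ, m ≠ 0 → 2 * |(m : ℝ)| ≤ n →
      |Real.sin (Real.pi * ((b : ℝ) - 1) * m / n) /
        (((b : ℝ) - 1) * Real.sin (Real.pi * m / n))| ≤ 1 ∧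
      |Real.sin (Real.pi * ((b : ℝ) - 1) * m / n) /
        (((b : ℝ) - 1) * Real.sin (Real.pi * m / n))| ≤
        (n : ℝ) / (2 * ((b : ℝ) - 1) * |(m : ℝ)|) := by
    intro m hm0 hm2
    have hmR : (0 : ℝ) < |(m : ℝ)| := by
      simp only [abs_pos, ne_eq, Int.cast_eq_zero]; exact hm0
    set y := Real.pi * m / n with hy
    have hyabs : |y| = Real.pi * |(m : ℝ)| / n := by
      rw [hy, abs_div, abs_mul, abs_of_pos hpi, abs_of_pos hnR]
    have hyle : |y| ≤ Real.pi / 2 := by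
      rw [hyabs, div_le_div_iff₀ hnR (by norm_num)]
      nlinarith
    -- lower bound on |sin y|
    have hsin1 : Real.sin |y| ≤ |Real.sin y| := by
      rcases abs_cases y with ⟨h1, _⟩ | ⟨h1, _⟩
      · rw [h1]; exact le_abs_self _
      · rw [h1, Real.sin_neg]; exact neg_le_abs _
    have hsin2 : 2 / Real.pi * |y| ≤ Real.sin |y| :=
      Real.mul_le_sin (abs_nonneg y) hyle
    have hsinlb : 2 * |(m : ℝ)| / n ≤ |Real.sin y| := by
      have : 2 / Real.pi * |y| = 2 * |(m : ℝ)| / n := by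
        rw [hyabs]; field_simp
      linarith
    have hsinpos : 0 < |Real.sin y| := lt_of_lt_of_le (by positivity) hsinlb
    -- numerator rewriting
    have hnum : Real.pi * ((b : ℝ) - 1) * m / n = ((b - 1 : ℕ) : ℝ) * y := by
      have : ((b - 1 : ℕ) : ℝ) = (b : ℝ) - 1 := by
        push_cast [Nat.cast_sub (by omega : 1 ≤ b)]; ring
      rw [this, hy]; ring
    have hnumle : |Real.sin (Real.pi * ((b : ℝ) - 1) * m / n)| ≤
        ((b : ℝ) - 1) * |Real.sin y| := by
      have hcast : ((b - 1 : ℕ) : ℝ) = (b : ℝ) - 1 := by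
        push_cast [Nat.cast_sub (by omega : 1 ≤ b)]; ring
      rw [hnum, ← hcast]
      exact abs_sin_nat_mul_le _ y
    have hnumle1 : |Real.sin (Real.pi * ((b : ℝ) - 1) * m / n)| ≤ 1 :=
      Real.abs_sin_le_one _
    have hden : |(((b : ℝ) - 1) * Real.sin y)| = ((b : ℝ) - 1) * |Real.sin y| := by
      rw [abs_mul, abs_of_pos (by linarith : (0:ℝ) < (b:ℝ) - 1)]
    have hdenpos : 0 < ((b : ℝ) - 1) * |Real.sin y| := by positivity
    constructor
    · rw [abs_div, hden, div_le_one hdenpos]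
      exact hnumle
    · rw [abs_div, hden, div_le_div_iff₀ hdenpos (by positivity)]
      calc |Real.sin (Real.pi * ((b : ℝ) - 1) * m / n)| * (2 * ((b : ℝ) - 1) * |(m : ℝ)|)
          ≤ 1 * (2 * ((b : ℝ) - 1) * |(m : ℝ)|) := by gcongr
        _ = ((b : ℝ) - 1) * (2 * |(m : ℝ)|) := by ring
        _ ≤ ((b : ℝ) - 1) * (n * |Real.sin y|) := by
            have h2 : 2 * |(m : ℝ)| ≤ n * |Real.sin y| := by
              rw [div_le_iff₀ hnR] at hsinlb
              linarith
            exact mul_le_mul_of_nonneg_left h2 (by linarith)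
        _ = (n : ℝ) * (((b : ℝ) - 1) * |Real.sin y|) := by ring
  -- each factor is at most 1 in absolute value
  have habs1 : ∀ s : Fin d, |H (j s)| ≤ 1 := by
    intro s
    by_cases h0 : j s = 0
    · rw [h0, hH0]; norm_num
    · rw [hH _ h0, abs_pow]
      exact pow_le_one₀ (abs_nonneg _) ((key _ h0 (hjr s)).1)
  by_cases hM0 : M = 0
  · -- all coordinates vanish
    have hall : ∀ s : Fin d, j s = 0 := by
      intro s
      have := Finset.le_sup (f := fun s => (j s).natAbs) (Finset.mem_univ s)
      rw [← hM, hM0, Nat.le_zero] at this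
      exact Int.natAbs_eq_zero.mp this
    simp only [hM0, Nat.cast_zero, mul_zero, add_zero, div_one]
    have : ∏ s, H (j s) = 1 := by
      rw [Finset.prod_congr rfl (fun s _ => by rw [hall s, hH0])]
      simp
    rw [this, abs_one]
    exact one_le_pow₀ (by norm_num)
  · -- M ≥ 1
    have hM1 : 1 ≤ M := Nat.one_le_iff_ne_zero.mpr hM0
    have hMR : (1 : ℝ) ≤ (M : ℝ) := by exact_mod_cast hM1
    obtain ⟨t, _, hts⟩ := Finset.exists_mem_eq_sup Finset.univ
      (Finset.univ_nonempty_iff.mpr (Fin.pos_iff_nonempty.mp hd))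
      (fun s => (j s).natAbs)
    have ht : (j t).natAbs = M := hts.symm
    have ht0 : j t ≠ 0 := by
      intro h; rw [h] at ht; simp at ht; omega
    have htabs : |((j t : ℤ) : ℝ)| = (M : ℝ) := by
      rw [← ht, Nat.cast_natAbs, Int.cast_abs]
    set c : ℝ := min 1 ((n : ℝ) / (2 * ((b : ℝ) - 1) * (M : ℝ))) with hc
    have hc0 : 0 ≤ c := le_min (by norm_num) (by positivity)
    have hHt : |H (j t)| ≤ c ^ F := by
      rw [hH _ ht0, abs_pow]
      apply pow_le_pow_left₀ (abs_nonneg _)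
      apply le_min ((key _ ht0 (hjr t)).1)
      have := (key _ ht0 (hjr t)).2
      rwa [htabs] at this
    -- product bound
    have hprod : |∏ s, H (j s)| ≤ c ^ F := by
      rw [Finset.abs_prod]
      calc ∏ s, |H (j s)| ≤ ∏ s, (if s = t then c ^ F else 1) := by
            apply Finset.prod_le_prod (fun s _ => abs_nonneg _)
            intro s _
            by_cases hst : s = t
            · subst hst; simp [hHt]
            · simp [hst, habs1 s]
        _ = c ^ F := by simp [Finset.prod_ite_eq' Finset.univ t (fun _ => c ^ F)]
    refine hprod.trans ?_
    apply pow_le_pow_left₀ hc0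
    -- base inequality
    by_cases hcase : (b : ℝ) * M ≤ n
    · refine (min_le_left _ _).trans ?_
      have hx : (b : ℝ) / n * M ≤ 1 := by
        rw [div_mul_eq_mul_div, div_le_one hnR]; exact hcase
      rw [le_div_iff₀ (by positivity)]
      linarith
    · push_neg at hcase
      refine (min_le_right _ _).trans ?_
      rw [div_le_div_iff₀ (by positivity) (by positivity)]
      have hexp : (n : ℝ) * (1 + (b : ℝ) / n * M) = n + (b : ℝ) * M := by
        field_simp
      rw [hexp]
      nlinarith [mul_nonneg (show (0:ℝ) ≤ (b:ℝ) - 2 by linarith)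
        (show (0:ℝ) ≤ (M:ℝ) by positivity)]
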